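/- Let F and H be j-γ_t-critical and k-γ_t-critical graphs, respectively, each with minimum degree at least two, and let G be the graph formed by identifying a vertex of F with a vertex of H (vertex amalgamation). If γ_t(G) = j + k − 1, then G is also γ_t-critical. -/

import Mathlib

open scoped Classical

namespace SimpleGraph

variable {V : Type*}

/-- A set `S` is a total dominating set if every vertex is adjacent to a vertex of `S`. -/
def IsTotalDomSet (G : SimpleGraph V) (S : Set V) : Prop :=
  ∀ v : V, ∃ u ∈ S, G.Adj v u

/-- The total domination number: minimum cardinality of a total dominating set. -/
noncomputable def totalDomNum (G : SimpleGraph V) [Fintype V] : ℕ :=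
  sInf {n : ℕ | ∃ S : Finset V, G.IsTotalDomSet ↑S ∧ S.card = n}

/-- The graph obtained by deleting the vertex `v`. -/
def deleteVert (G : SimpleGraph V) (v : V) : SimpleGraph {u : V // u ≠ v} :=
  G.induce {u : V | u ≠ v}

/-- A support vertex is a vertex adjacent to a leaf (a vertex of degree one). -/
noncomputable def IsSupportVertex (G : SimpleGraph V) [Fintype V] (v : V) : Prop :=
  ∃ u : V, G.Adj v u ∧ G.degree u = 1

/-- `G` is total domination vertex critical: it has no isolated vertex and deleting any
vertex that is not a support vertex decreases the total domination number. -/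
noncomputable def IsTotalDomCritical (G : SimpleGraph V) [Fintype V] : Prop :=
  (∀ v : V, 0 < G.degree v) ∧
  ∀ v : V, ¬ G.IsSupportVertex v →
    (G.deleteVert v).totalDomNum < G.totalDomNum

/-- The vertex amalgamation of `G₁` and `G₂` identifying `v₁` with `v₂`. -/
def amalgamation {V₁ V₂ : Type*} (G₁ : SimpleGraph V₁) (G₂ : SimpleGraph V₂)
    (v₁ : V₁) (v₂ : V₂) : SimpleGraph (V₁ ⊕ {x : V₂ // x ≠ v₂}) where
  Adj x y :=
    match x, y with
    | Sum.inl a, Sum.inl b => G₁.Adj a b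
    | Sum.inl a, Sum.inr b => a = v₁ ∧ G₂.Adj v₂ b.1
    | Sum.inr a, Sum.inl b => b = v₁ ∧ G₂.Adj v₂ a.1
    | Sum.inr a, Sum.inr b => G₂.Adj a.1 b.1
  symm := ⟨by
    rintro (a | a) (b | b) h
    · exact G₁.adj_symm h
    · exact h
    · exact h
    · exact G₂.adj_symm h⟩
  loopless := ⟨by
    rintro (a | a) h
    · exact G₁.irrefl (v := a) h
    · exact G₂.irrefl (v := a.1) h⟩

lemma totalDomNum_le_card' (G : SimpleGraph V) [Fintype V] {S : Finset V}
    (h : G.IsTotalDomSet ↑S) : G.totalDomNum ≤ S.card :=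
  Nat.sInf_le ⟨S, h, rfl⟩

lemma aux_exists_small (G : SimpleGraph V) [Fintype V]
    (hc : G.IsTotalDomCritical) (h2 : ∀ u, 2 ≤ G.degree u) (v : V) :
    ∃ S : Finset {u : V // u ≠ v}, (G.deleteVert v).IsTotalDomSet ↑S ∧
      S.card < G.totalDomNum := by
  have hns : ¬ G.IsSupportVertex v := by
    rintro ⟨u, _, hu⟩
    have := h2 u; omega
  have hlt := hc.2 v hns
  have huniv : (G.deleteVert v).IsTotalDomSet ↑(Finset.univ : Finset {u : V // u ≠ v}) := by
    rintro ⟨u, hu⟩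
    have h2u : 1 < (G.neighborFinset u).card := by
      rw [card_neighborFinset_eq_degree]; exact h2 u
    obtain ⟨b, hb, c, hc', hbc⟩ := Finset.one_lt_card.mp h2u
    rw [mem_neighborFinset] at hb hc'
    by_cases hbv : b = v
    · refine ⟨⟨c, ?_⟩, by simp, hc'⟩
      rintro rfl; exact hbc hbv
    · exact ⟨⟨b, hbv⟩, by simp, hb⟩
  have hmem : (G.deleteVert v).totalDomNum ∈
      {n : ℕ | ∃ S : Finset {u : V // u ≠ v}, (G.deleteVert v).IsTotalDomSet ↑S ∧ S.card = n} :=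
    Nat.sInf_mem ⟨_, Finset.univ, huniv, rfl⟩
  obtain ⟨S, hS, hSc⟩ := hmem
  exact ⟨S, hS, hSc ▸ hlt⟩

lemma amalg_deg {V₁ V₂ : Type*} [Fintype V₁] [Fintype V₂]
    (F : SimpleGraph V₁) (H : SimpleGraph V₂) (v₁ : V₁) (v₂ : V₂)
    (hFd : ∀ u, 2 ≤ F.degree u) (hHd : ∀ u, 2 ≤ H.degree u)
    (w : V₁ ⊕ {x : V₂ // x ≠ v₂}) : 2 ≤ (amalgamation F H v₁ v₂).degree w := by
  rw [← card_neighborFinset_eq_degree, Nat.succ_le_iff, Finset.one_lt_card]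
  obtain (a | a) := w
  · have h2u : 1 < (F.neighborFinset a).card := by
      rw [card_neighborFinset_eq_degree]; exact hFd a
    obtain ⟨b, hb, c, hc', hbc⟩ := Finset.one_lt_card.mp h2u
    rw [mem_neighborFinset] at hb hc'
    refine ⟨Sum.inl b, ?_, Sum.inl c, ?_, by simp [hbc]⟩
    · rw [mem_neighborFinset]; exact hb
    · rw [mem_neighborFinset]; exact hc'
  · have h2u : 1 < (H.neighborFinset a.1).card := by
      rw [card_neighborFinset_eq_degree]; exact hHd a.1
    obtain ⟨b, hb, c, hc', hbc⟩ := Finset.one_lt_card.mp h2u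
    rw [mem_neighborFinset] at hb hc'
    classical
    set f : V₂ → V₁ ⊕ {x : V₂ // x ≠ v₂} :=
      fun x => if h : x = v₂ then Sum.inl v₁ else Sum.inr ⟨x, h⟩ with hf
    have hadj : ∀ x, H.Adj a.1 x → (amalgamation F H v₁ v₂).Adj (Sum.inr a) (f x) := by
      intro x hx
      by_cases hxv : x = v₂
      · rw [hf]; simp only [dif_pos hxv]
        exact ⟨rfl, hxv ▸ hx.symm⟩
      · rw [hf]; simp only [dif_neg hxv]
        exact hx
    have hinj : f b ≠ f c := by
      rw [hf]
      by_cases hbv : b = v₂ <;> by_cases hcv : c = v₂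
      · exact absurd (hbv.trans hcv.symm) hbc
      · simp [dif_pos hbv, dif_neg hcv]
      · simp [dif_pos hcv, dif_neg hbv]
      · simp only [dif_neg hbv, dif_neg hcv]
        intro hcon
        apply hbc
        simpa [Subtype.ext_iff] using hcon
    refine ⟨f b, ?_, f c, ?_, hinj⟩
    · rw [mem_neighborFinset]; exact hadj b hb
    · rw [mem_neighborFinset]; exact hadj c hc'

/-- the vertex amalgamation of a `j`-critical and a `k`-critical graph
(with minimum degree at least two) having total domination number `j + k - 1`
is itself `γₜ`-critical. -/
theorem stmt1 {V₁ V₂ : Type*} [Fintype V₁] [Fintype V₂]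
    (F : SimpleGraph V₁) (H : SimpleGraph V₂) (j k : ℕ) (v₁ : V₁) (v₂ : V₂)
    (hF : F.IsTotalDomCritical) (hFj : F.totalDomNum = j)
    (hH : H.IsTotalDomCritical) (hHk : H.totalDomNum = k)
    (hFδ : 2 ≤ F.minDegree) (hHδ : 2 ≤ H.minDegree)
    (hγ : (amalgamation F H v₁ v₂).totalDomNum = j + k - 1) :
    (amalgamation F H v₁ v₂).IsTotalDomCritical := by
  have hFd : ∀ u, 2 ≤ F.degree u := fun u => le_trans hFδ (F.minDegree_le_degree u)
  have hHd : ∀ u, 2 ≤ H.degree u := fun u => le_trans hHδ (H.minDegree_le_degree u)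
  have hGd := amalg_deg F H v₁ v₂ hFd hHd
  refine ⟨fun w => lt_of_lt_of_le (by norm_num) (hGd w), ?_⟩
  rintro (a | a) _
  · -- delete a vertex on the F side (possibly the identified vertex)
    obtain ⟨SF, hSF, hSFc⟩ := aux_exists_small F hF hFd a
    obtain ⟨SH, hSH, hSHc⟩ := aux_exists_small H hH hHd v₂
    rw [hFj] at hSFc; rw [hHk] at hSHc
    set W := V₁ ⊕ {x : V₂ // x ≠ v₂}
    let T : Finset {w : W // w ≠ Sum.inl a} :=
      SF.image (fun u => ⟨Sum.inl u.1, fun h => u.2 (Sum.inl.inj h)⟩) ∪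
      SH.image (fun u => ⟨Sum.inr u, by simp⟩)
    have hT : ((amalgamation F H v₁ v₂).deleteVert (Sum.inl a)).IsTotalDomSet ↑T := by
      rintro ⟨(b | b), hw⟩
      · have hba : b ≠ a := fun h => hw (by simp [h])
        obtain ⟨u, hu, hadj⟩ := hSF ⟨b, hba⟩
        exact ⟨⟨Sum.inl u.1, fun h => u.2 (Sum.inl.inj h)⟩,
          Finset.mem_coe.mpr (Finset.mem_union_left _ (Finset.mem_image_of_mem _ hu)), hadj⟩
      · obtain ⟨u, hu, hadj⟩ := hSH b
        exact ⟨⟨Sum.inr u, by simp⟩,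
          Finset.mem_coe.mpr (Finset.mem_union_right _ (Finset.mem_image_of_mem _ hu)), hadj⟩
    refine lt_of_le_of_lt (Nat.sInf_le ⟨T, hT, rfl⟩) ?_
    have h2 : T.card ≤ SF.card + SH.card :=
      le_trans (Finset.card_union_le _ _)
        (Nat.add_le_add (Finset.card_image_le) (Finset.card_image_le))
    rw [hγ]
    omega
  · -- delete a vertex on the H side
    obtain ⟨SF, hSF, hSFc⟩ := aux_exists_small F hF hFd v₁
    obtain ⟨SH, hSH, hSHc⟩ := aux_exists_small H hH hHd a.1
    rw [hFj] at hSFc; rw [hHk] at hSHc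
    set W := V₁ ⊕ {x : V₂ // x ≠ v₂}
    have hfa : ∀ u : {x : V₂ // x ≠ a.1}, ∀ h : ¬ u.1 = v₂,
        (Sum.inr ⟨u.1, h⟩ : W) ≠ Sum.inr a := by
      intro u h hcon
      apply u.2
      have := Sum.inr.inj hcon
      exact congrArg Subtype.val this
    let f : {x : V₂ // x ≠ a.1} → {w : W // w ≠ Sum.inr a} :=
      fun u => if h : u.1 = v₂ then ⟨Sum.inl v₁, by simp⟩
        else ⟨Sum.inr ⟨u.1, h⟩, hfa u h⟩
    let T : Finset {w : W // w ≠ Sum.inr a} :=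
      SF.image (fun u => ⟨Sum.inl u.1, by simp⟩) ∪ SH.image f
    have hmemT : ∀ u ∈ SH, f u ∈ (↑T : Set {w : W // w ≠ Sum.inr a}) :=
      fun u hu => Finset.mem_coe.mpr (Finset.mem_union_right _ (Finset.mem_image_of_mem f hu))
    have hT : ((amalgamation F H v₁ v₂).deleteVert (Sum.inr a)).IsTotalDomSet ↑T := by
      rintro ⟨(b | b), hw⟩
      · by_cases hbv : b = v₁
        · have hv₂a : (v₂ : V₂) ≠ a.1 := fun h => a.2 h.symm
          obtain ⟨u, hu, hadj⟩ := hSH ⟨v₂, hv₂a⟩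
          have huv : ¬ u.1 = v₂ := by
            intro h
            have h2 : H.Adj v₂ u.1 := hadj
            rw [h] at h2
            exact H.irrefl h2
          have hAdj : ((amalgamation F H v₁ v₂).deleteVert (Sum.inr a)).Adj ⟨Sum.inl b, hw⟩ (f u) := by
            show ((amalgamation F H v₁ v₂)).Adj (Sum.inl b) (f u).1
            have hfu : (f u).1 = Sum.inr ⟨u.1, huv⟩ := by
              simp only [f, dif_neg huv]
            rw [hfu]
            exact ⟨hbv, hadj⟩
          exact ⟨f u, hmemT u hu, hAdj⟩
        · obtain ⟨u, hu, hadj⟩ := hSF ⟨b, hbv⟩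
          exact ⟨⟨Sum.inl u.1, by simp⟩,
            Finset.mem_coe.mpr (Finset.mem_union_left _ (Finset.mem_image_of_mem _ hu)), hadj⟩
      · have hba : b.1 ≠ a.1 := by
          intro h
          exact hw (by simp [Subtype.ext h])
        obtain ⟨u, hu, hadj⟩ := hSH ⟨b.1, hba⟩
        have hAdj : ((amalgamation F H v₁ v₂).deleteVert (Sum.inr a)).Adj ⟨Sum.inr b, hw⟩ (f u) := by
          show ((amalgamation F H v₁ v₂)).Adj (Sum.inr b) (f u).1
          by_cases huv : u.1 = v₂
          · have hfu : (f u).1 = Sum.inl v₁ := by simp only [f, dif_pos huv]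
            rw [hfu]
            refine ⟨rfl, ?_⟩
            have h2 : H.Adj u.1 b.1 := hadj.symm
            rwa [huv] at h2
          · have hfu : (f u).1 = Sum.inr ⟨u.1, huv⟩ := by simp only [f, dif_neg huv]
            rw [hfu]
            exact hadj
        exact ⟨f u, hmemT u hu, hAdj⟩
    refine lt_of_le_of_lt (Nat.sInf_le ⟨T, hT, rfl⟩) ?_
    have h2 : T.card ≤ SF.card + SH.card :=
      le_trans (Finset.card_union_le _ _)
        (Nat.add_le_add (Finset.card_image_le) (Finset.card_image_le))
    rw [hγ]
    omega


end SimpleGraph
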